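/- Assume: with probability 1, the function h ↦ S_1(h) is twice continuously differentiable on H; sup_{h∈H} ‖∇²_h S_1(h)‖ is measurable with E(sup_{h∈H} ‖∇²_h S_1(h)‖) < ∞; and the interchange ∇²_h E(S_1(h)) = E(∇²_h S_1(h)) holds for all h ∈ H. Define B_R(h) = (∑_{r=1}^R S_r(h)) / (∑_{r=1}^R N_r) and B(h) = E(S_1(h))/E(N_1). Then, almost surely, sup_{h∈H} ‖∇²_h B_R(h) − ∇²_h B(h)‖ → 0 as R → ∞. -/

import Mathlib

open MeasureTheory ProbabilityTheory Filter Topology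

/-- The Hessian of `f : ℝ^k → ℝ` at a point, as a continuous linear map, i.e. the derivative of
the gradient. -/
noncomputable def hess {k : ℕ} (f : EuclideanSpace ℝ (Fin k) → ℝ)
    (h : EuclideanSpace ℝ (Fin k)) :
    EuclideanSpace ℝ (Fin k) →L[ℝ] EuclideanSpace ℝ (Fin k) :=
  fderiv ℝ (fun x => gradient f x) h


set_option synthInstance.maxHeartbeats 1000000
set_option maxHeartbeats 1600000

variable {k : ℕ}
local notation "E" => EuclideanSpace ℝ (Fin k)

-- fderiv of const smul, unconditionally, for nonzero constant
lemma fderiv_csmul {F G : Type*} [NormedAddCommGroup F] [NormedSpace ℝ F]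
    [NormedAddCommGroup G] [NormedSpace ℝ G]
    (f : F → G) (c : ℝ) (hc : c ≠ 0) (x : F) :
    fderiv ℝ (fun y => c • f y) x = c • fderiv ℝ f x := by
  by_cases hd : DifferentiableAt ℝ f x
  · exact fderiv_const_smul hd c
  · have hd2 : ¬ DifferentiableAt ℝ (fun y => c • f y) x := by
      intro h2
      have := h2.fun_const_smul c⁻¹
      simp only [smul_smul, inv_mul_cancel₀ hc, one_smul] at this
      exact hd this
    rw [fderiv_zero_of_not_differentiableAt hd, fderiv_zero_of_not_differentiableAt hd2,
      smul_zero]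

lemma gradient_csmul (f : E → ℝ) (c : ℝ) (hc : c ≠ 0) (x : E) :
    gradient (fun y => c • f y) x = c • gradient f x := by
  unfold gradient
  rw [fderiv_csmul f c hc x, _root_.map_smul]

lemma hess_csmul (f : E → ℝ) (c : ℝ) (hc : c ≠ 0) (h : E) :
    hess (fun y => c • f y) h = c • hess f h := by
  unfold hess
  have : (fun x => gradient (fun y => c • f y) x) = fun x => c • gradient f x := by
    funext x; exact gradient_csmul f c hc x
  rw [this, fderiv_csmul (fun x => gradient f x) c hc h]

lemma hess_div_const (f : E → ℝ) (c : ℝ) (hc : c ≠ 0) (h : E) :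
    hess (fun x => f x / c) h = c⁻¹ • hess f h := by
  have : (fun x => f x / c) = fun x => c⁻¹ • f x := by
    funext x; simp [div_eq_inv_mul, smul_eq_mul]
  rw [this, hess_csmul f c⁻¹ (inv_ne_zero hc) h]

lemma toDualSymm_bdd :
    IsBoundedLinearMap ℝ (fun ℓ : E →L[ℝ] ℝ => (InnerProductSpace.toDual ℝ E).symm ℓ) where
  map_add x y := by simp
  map_smul c ℓ := by
    simp [LinearIsometryEquiv.map_smulₛₗ, starRingEnd_apply, star_trivial]
  bound := ⟨1, one_pos, fun ℓ => by simp⟩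

lemma grad_contDiff {f : E → ℝ} (hf : ContDiff ℝ 2 f) :
    ContDiff ℝ 1 (fun x => gradient f x) := by
  have h1 : ContDiff ℝ 1 (fderiv ℝ f) :=
    ((contDiff_succ_iff_fderiv (n := 1)).mp (by exact_mod_cast hf)).2.2
  exact toDualSymm_bdd.contDiff.comp h1

lemma grad_diff {f : E → ℝ} (hf : ContDiff ℝ 2 f) :
    Differentiable ℝ (fun x => gradient f x) :=
  (grad_contDiff hf).differentiable one_ne_zero

lemma hess_cont {f : E → ℝ} (hf : ContDiff ℝ 2 f) :
    Continuous (fun h => hess f h) := by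
  unfold hess
  exact (grad_contDiff hf).continuous_fderiv one_ne_zero

lemma gradient_sum {ι : Type*} (t : Finset ι) (f : ι → E → ℝ)
    (hf : ∀ r ∈ t, ContDiff ℝ 2 (f r)) (x : E) :
    gradient (fun y => ∑ r ∈ t, f r y) x = ∑ r ∈ t, gradient (f r) x := by
  unfold gradient
  rw [fderiv_fun_sum (fun r hr => ((hf r hr).differentiable (by norm_num)).differentiableAt),
    _root_.map_sum]

lemma hess_sum {ι : Type*} (t : Finset ι) (f : ι → E → ℝ)
    (hf : ∀ r ∈ t, ContDiff ℝ 2 (f r)) (h : E) :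
    hess (fun y => ∑ r ∈ t, f r y) h = ∑ r ∈ t, hess (f r) h := by
  unfold hess
  have e1 : (fun x => gradient (fun y => ∑ r ∈ t, f r y) x)
      = fun x => ∑ r ∈ t, gradient (f r) x := by
    funext x; exact gradient_sum t f hf x
  rw [e1, fderiv_fun_sum (fun r hr => (grad_diff (hf r hr)).differentiableAt)]

/-- measurable "directional derivative" recipe -/
noncomputable def ederiv (f : E → ℝ) (v y : E) : ℝ :=
  (Filter.limsup (fun n : ℕ => (((n : ℝ) * (f (y + ((n : ℝ))⁻¹ • v) - f y) : ℝ) : EReal))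
    atTop).toReal

lemma tendsto_norm_natCast : Tendsto (fun n : ℕ => ‖(n : ℝ)‖) atTop atTop := by
  simp only [Real.norm_natCast]
  exact tendsto_natCast_atTop_atTop

lemma ederiv_eq {f : E → ℝ} {y : E} (hf : DifferentiableAt ℝ f y) (v : E) :
    ederiv f v y = fderiv ℝ f y v := by
  have h1 : Tendsto (fun n : ℕ => (n : ℝ) * (f (y + ((n : ℝ))⁻¹ • v) - f y)) atTop
      (𝓝 (fderiv ℝ f y v)) := by
    simpa [smul_eq_mul] using hf.hasFDerivAt.lim v tendsto_norm_natCast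
  have h2 : Tendsto (fun n : ℕ =>
      (((n : ℝ) * (f (y + ((n : ℝ))⁻¹ • v) - f y) : ℝ) : EReal)) atTop
      (𝓝 ((fderiv ℝ f y v : ℝ) : EReal)) := EReal.tendsto_coe.mpr h1
  rw [ederiv, h2.limsup_eq, EReal.toReal_coe]

/-- measurable second directional derivative recipe -/
noncomputable def ederiv2 (f : E → ℝ) (v w y : E) : ℝ :=
  (Filter.limsup (fun n : ℕ =>
    (((n : ℝ) * (ederiv f v (y + ((n : ℝ))⁻¹ • w) - ederiv f v y) : ℝ) : EReal)) atTop).toReal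

lemma ederiv_eq_deriv_fun {f : E → ℝ} (hf : ContDiff ℝ 2 f) (v : E) :
    ederiv f v = fun y => fderiv ℝ f y v := by
  funext y
  exact ederiv_eq ((hf.differentiable (by norm_num)).differentiableAt) v

lemma fderiv_apply_contDiff {f : E → ℝ} (hf : ContDiff ℝ 2 f) (v : E) :
    ContDiff ℝ 1 (fun y => fderiv ℝ f y v) := by
  have h1 : ContDiff ℝ 1 (fderiv ℝ f) :=
    ((contDiff_succ_iff_fderiv (n := 1)).mp (by exact_mod_cast hf)).2.2
  exact (ContinuousLinearMap.apply ℝ ℝ v).contDiff.comp h1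

lemma ederiv2_eq {f : E → ℝ} (hf : ContDiff ℝ 2 f) (v w y : E) :
    ederiv2 f v w y = fderiv ℝ (fun z => fderiv ℝ f z v) y w := by
  rw [ederiv2, ederiv_eq_deriv_fun hf v]
  have hd : DifferentiableAt ℝ (fun z => fderiv ℝ f z v) y :=
    ((fderiv_apply_contDiff hf v).differentiable one_ne_zero).differentiableAt
  have h1 : Tendsto (fun n : ℕ =>
      (n : ℝ) * ((fun z => fderiv ℝ f z v) (y + ((n : ℝ))⁻¹ • w) - fderiv ℝ f y v)) atTop
      (𝓝 (fderiv ℝ (fun z => fderiv ℝ f z v) y w)) := by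
    simpa [smul_eq_mul] using hd.hasFDerivAt.lim w tendsto_norm_natCast
  have h2 := EReal.tendsto_coe.mpr h1
  rw [h2.limsup_eq, EReal.toReal_coe]

noncomputable def eij (i j : Fin k) : E →L[ℝ] E :=
  (EuclideanSpace.proj j).smulRight (EuclideanSpace.single i 1)

lemma euclidean_eq_sum_single (x : E) : x = ∑ j, x j • EuclideanSpace.single j 1 := by
  have := (EuclideanSpace.basisFun (Fin k) ℝ).sum_repr x
  simp only [EuclideanSpace.basisFun_apply, EuclideanSpace.basisFun_repr] at this
  exact this.symm

lemma clm_decomp (A : E →L[ℝ] E) :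
    A = ∑ i, ∑ j, (A (EuclideanSpace.single j 1) i) • eij i j := by
  refine ContinuousLinearMap.ext fun x => ?_
  have hx : A x = ∑ j, x j • A (EuclideanSpace.single j 1) := by
    conv_lhs => rw [euclidean_eq_sum_single x]
    rw [map_sum]
    simp
  rw [hx]
  simp only [ContinuousLinearMap.sum_apply, ContinuousLinearMap.smul_apply, eij,
    ContinuousLinearMap.smulRight_apply]
  calc ∑ j, x j • A (EuclideanSpace.single j 1)
      = ∑ j, ∑ i, (A (EuclideanSpace.single j 1) i) •
          ((EuclideanSpace.proj (𝕜 := ℝ) j) x • EuclideanSpace.single i 1) := by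
        refine Finset.sum_congr rfl fun j _ => ?_
        conv_lhs => rw [euclidean_eq_sum_single (A (EuclideanSpace.single j 1))]
        rw [Finset.smul_sum]
        refine Finset.sum_congr rfl fun i _ => ?_
        rw [smul_smul, smul_smul, mul_comm]
        rfl
    _ = _ := Finset.sum_comm

noncomputable def recipe (f : E → ℝ) (h : E) : E →L[ℝ] E :=
  ∑ i, ∑ j, ederiv2 f (EuclideanSpace.single i 1) (EuclideanSpace.single j 1) h • eij i j

lemma hess_apply_coord {f : E → ℝ} (hf : ContDiff ℝ 2 f) (h : E) (i j : Fin k) :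
    hess f h (EuclideanSpace.single j 1) i
      = ederiv2 f (EuclideanSpace.single i 1) (EuclideanSpace.single j 1) h := by
  have hgd : DifferentiableAt ℝ (fun x => gradient f x) h := (grad_diff hf).differentiableAt
  have hcomp := ((EuclideanSpace.proj (𝕜 := ℝ) i).hasFDerivAt).comp h
    hgd.hasFDerivAt
  simp only [Function.comp_def] at hcomp
  have hpi : (fun y => (EuclideanSpace.proj (𝕜 := ℝ) i) (gradient f y))
      = fun y => fderiv ℝ f y (EuclideanSpace.single i 1) := by
    funext y
    show (gradient f y) i = fderiv ℝ f y (EuclideanSpace.single i 1)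
    have h1 : (gradient f y) i
        = inner (𝕜 := ℝ) (gradient f y) (EuclideanSpace.single i (1:ℝ)) := by
      rw [EuclideanSpace.inner_single_right]
      simp
    rw [h1]
    exact InnerProductSpace.toDual_symm_apply
  rw [ederiv2_eq hf]
  have hthis := hcomp.fderiv
  rw [hpi] at hthis
  rw [hthis]
  rfl

lemma recipe_eq_hess {f : E → ℝ} (hf : ContDiff ℝ 2 f) (h : E) :
    recipe f h = hess f h := by
  rw [clm_decomp (hess f h), recipe]
  refine Finset.sum_congr rfl fun i _ => Finset.sum_congr rfl fun j _ => ?_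
  rw [hess_apply_coord hf h i j]

noncomputable instance clmMS : MeasurableSpace (E →L[ℝ] E) := borel _
instance clmBorel : BorelSpace (E →L[ℝ] E) := ⟨rfl⟩

noncomputable instance cmMS (H : Set E) :
    MeasurableSpace C(↥H, E →L[ℝ] E) := borel _
instance cmBorel (H : Set E) : BorelSpace C(↥H, E →L[ℝ] E) := ⟨rfl⟩

lemma measurable_ederiv (v y : E) : Measurable (fun f : E → ℝ => ederiv f v y) := by
  apply measurable_ereal_toReal.comp
  apply Measurable.limsup
  intro n
  exact measurable_coe_real_ereal.comp
    (((measurable_pi_apply (y + ((n : ℝ))⁻¹ • v)).sub (measurable_pi_apply y)).const_mul _)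

lemma measurable_ederiv2 (v w y : E) : Measurable (fun f : E → ℝ => ederiv2 f v w y) := by
  apply measurable_ereal_toReal.comp
  apply Measurable.limsup
  intro n
  exact measurable_coe_real_ereal.comp
    (((measurable_ederiv v _).sub (measurable_ederiv v _)).const_mul _)

lemma measurable_recipe (h : E) : Measurable (fun f : E → ℝ => recipe f h) := by
  apply Finset.measurable_sum
  intro i _
  apply Finset.measurable_sum
  intro j _
  have hcont : Continuous (fun r : ℝ => r • eij (k := k) i j) :=
    continuous_id.smul continuous_const
  exact hcont.measurable.comp (measurable_ederiv2 _ _ _)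

lemma exists_Gamma (H : Set E) (hH : IsCompact H) :
    ∃ Γ : (E → ℝ) → C(↥H, E →L[ℝ] E), Measurable Γ ∧
      ∀ f, ContDiff ℝ 2 f → ∀ h : ↥H, (Γ f) h = hess f (h : E) := by
  haveI : CompactSpace ↥H := isCompact_iff_compactSpace.mp hH
  obtain ⟨D, hDc, hDd⟩ := TopologicalSpace.exists_countable_dense ↥H
  haveI : Countable ↥D := hDc.to_subtype
  set X := (E →L[ℝ] E)
  let e : C(↥H, X) → (↥D → X) := fun g => fun d => g (d : ↥H)
  have he_cont : Continuous e := continuous_pi fun d => continuous_eval_const _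
  have he_inj : Function.Injective e := by
    intro g1 g2 hgg
    apply ContinuousMap.ext
    have := Continuous.ext_on hDd g1.continuous g2.continuous
      (fun x hx => congrFun hgg ⟨x, hx⟩)
    exact fun a => congrFun this a
  haveI hsc : SecondCountableTopology X := inferInstance
  haveI : BorelSpace (↥D → X) := Pi.borelSpace
  haveI : TopologicalSpace.IsCompletelyMetrizableSpace C(↥H, X) :=
    @MetricSpace.toIsCompletelyMetrizableSpace C(↥H, X) _ _
  haveI : PolishSpace C(↥H, X) :=
    inferInstance
  have me : MeasurableEmbedding e := he_cont.measurableEmbedding he_inj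
  refine ⟨fun f => Function.extend e id (fun _ => 0) (fun d : ↥D => recipe f (d : ↥H)),
    ?_, ?_⟩
  · exact (me.measurable_extend measurable_id measurable_const).comp
      (measurable_pi_lambda _ (fun d => measurable_recipe _))
  · intro f hf h
    have hcont : Continuous (fun h : ↥H => hess f (h : E)) :=
      (hess_cont hf).comp continuous_subtype_val
    have hkey : (fun d : ↥D => recipe f (d : ↥H)) = e ⟨fun h : ↥H => hess f (h : E), hcont⟩ := by
      funext d
      exact recipe_eq_hess hf _
    show Function.extend e id (fun _ => 0) (fun d : ↥D => recipe f (d : ↥H)) h = hess f (h : E)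
    rw [hkey, he_inj.extend_apply]
    rfl

/-- uniform a.s. convergence of Hessians.  For iid tour pairs `(N_r, S_r)`
with `S₁` a.s. twice continuously differentiable, `sup_{h ∈ H} ‖∇²_h S₁(h)‖` integrable, and
the interchange `∇²_h E S₁(h) = E ∇²_h S₁(h)` valid on `H`:  almost surely
`sup_{h ∈ H} ‖∇² B_R(h) − ∇² B(h)‖ → 0`, where `B_R(h) = ∑_{r≤R} S_r(h) / ∑_{r≤R} N_r` and
`B(h) = E S₁(h) / E N₁`. -/
theorem stmt18 {k : ℕ} (H : Set (EuclideanSpace ℝ (Fin k))) (hH : IsCompact H)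
    {Ω : Type*} [MeasurableSpace Ω] (μ : Measure Ω) [IsProbabilityMeasure μ]
    (N : ℕ → Ω → ℕ) (S : ℕ → Ω → EuclideanSpace ℝ (Fin k) → ℝ)
    (hN_pos : ∀ r ω, 1 ≤ N r ω)
    (hN_int : Integrable (fun ω => (N 0 ω : ℝ)) μ)
    (hiid_indep : iIndepFun (fun r ω => (N r ω, S r ω)) μ)
    (hiid_ident : ∀ r, IdentDistrib (fun ω => (N r ω, S r ω)) (fun ω => (N 0 ω, S 0 ω)) μ μ)
    (hS_int : ∀ h, Integrable (fun ω => S 0 ω h) μ)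
    (hsmooth : ∀ r, ∀ᵐ ω ∂μ, ContDiff ℝ 2 (S r ω))
    (hsupHess_meas : ∀ r, Measurable (fun ω => ⨆ h : H, ‖hess (S r ω) h‖))
    (hsupHess_int : ∀ r, Integrable (fun ω => ⨆ h : H, ‖hess (S r ω) h‖) μ)
    (hinterchange : ∀ h ∈ H,
      hess (fun x => ∫ ω, S 0 ω x ∂μ) h = ∫ ω, hess (S 0 ω) h ∂μ) :
    ∀ᵐ ω ∂μ, Tendsto (fun R : ℕ =>
        ⨆ h : H,
          ‖hess (fun x => (∑ r ∈ Finset.range R, S r ω x)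
              / (∑ r ∈ Finset.range R, (N r ω : ℝ))) h
            - hess (fun x => (∫ ω', S 0 ω' x ∂μ) / (∫ ω', (N 0 ω' : ℝ) ∂μ)) h‖)
      atTop (𝓝 0) := by
  classical
  rcases isEmpty_or_nonempty ↥H with hHe | hHne
  · -- empty case : all the sups are 0
    filter_upwards with ω
    have hz : ∀ R : ℕ, (⨆ h : H,
          ‖hess (fun x => (∑ r ∈ Finset.range R, S r ω x)
              / (∑ r ∈ Finset.range R, (N r ω : ℝ))) h
            - hess (fun x => (∫ ω', S 0 ω' x ∂μ) / (∫ ω', (N 0 ω' : ℝ) ∂μ)) h‖) = 0 := by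
      intro R
      rw [iSup, Set.range_eq_empty, Real.sSup_empty]
    simp only [hz]
    exact tendsto_const_nhds
  haveI : CompactSpace ↥H := isCompact_iff_compactSpace.mp hH
  obtain ⟨Γ, hΓm, hΓeq⟩ := exists_Gamma H hH
  set X := (EuclideanSpace ℝ (Fin k) →L[ℝ] EuclideanSpace ℝ (Fin k)) with hX
  set W : ℕ → Ω → C(↥H, X) := fun r ω => Γ (S r ω) with hW
  letI : ContinuousENorm C(↥H, X) := @SeminormedAddGroup.toContinuousENorm C(↥H, X) _
  -- measurability
  have hpair : ∀ r, AEMeasurable (fun ω => (N r ω, S r ω)) μ :=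
    fun r => (hiid_ident r).aemeasurable_fst
  have hSr : ∀ r, AEMeasurable (fun ω => S r ω) μ :=
    fun r => measurable_snd.comp_aemeasurable (hpair r)
  have hWaem : ∀ r, AEMeasurable (W r) μ := fun r => hΓm.comp_aemeasurable (hSr r)
  have hWsm : ∀ r, AEStronglyMeasurable (W r) μ := fun r => (hWaem r).aestronglyMeasurable
  -- independence and identical distribution
  have hφm : Measurable (fun p : ℕ × (EuclideanSpace ℝ (Fin k) → ℝ) => Γ p.2) :=
    hΓm.comp measurable_snd
  have hindep : Pairwise (Function.onFun (IndepFun · · μ) W) := by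
    intro i j hij
    exact (hiid_indep.indepFun hij).comp hφm hφm
  have hident : ∀ r, IdentDistrib (W r) (W 0) μ μ := fun r => (hiid_ident r).comp hφm
  -- norm identification
  have hnorm : ∀ r, ∀ᵐ ω ∂μ, ‖W r ω‖ = ⨆ h : H, ‖hess (S r ω) h‖ := by
    intro r
    filter_upwards [hsmooth r] with ω hc
    rw [ContinuousMap.norm_eq_iSup_norm]
    exact congrArg iSup (funext fun h => by rw [hΓeq _ hc h])
  -- integrability
  have hWint : Integrable (W 0) μ := by
    refine Integrable.mono' (f := W 0) (hsupHess_int 0) ?_ ?_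
    · exact hWsm 0
    filter_upwards [hnorm 0] with ω hω
    exact le_of_eq hω
  -- strong laws
  have hslW := ProbabilityTheory.strong_law_ae W hWint hindep hident
  set EW : C(↥H, X) := μ[W 0] with hEW
  have hNm : ∀ r, AEMeasurable (fun ω => (N r ω : ℝ)) μ := fun r =>
    (Measurable.of_discrete (f := fun n : ℕ => (n : ℝ))).comp_aemeasurable
      ((measurable_fst.comp_aemeasurable (hpair r)))
  have hNψ : Measurable (fun p : ℕ × (EuclideanSpace ℝ (Fin k) → ℝ) => ((p.1 : ℕ) : ℝ)) :=
    (Measurable.of_discrete (f := fun n : ℕ => (n : ℝ))).comp measurable_fst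
  have hNindep : Pairwise (Function.onFun (IndepFun · · μ) (fun r ω => (N r ω : ℝ))) := by
    intro i j hij
    exact (hiid_indep.indepFun hij).comp hNψ hNψ
  have hNident : ∀ r, IdentDistrib (fun ω => (N r ω : ℝ)) (fun ω => (N 0 ω : ℝ)) μ μ :=
    fun r => (hiid_ident r).comp hNψ
  have hslN := ProbabilityTheory.strong_law_ae_real (fun r ω => (N r ω : ℝ)) hN_int
    hNindep hNident
  set m : ℝ := μ[fun ω => (N 0 ω : ℝ)] with hm
  have hm1 : 1 ≤ m := by
    rw [hm]
    calc (1 : ℝ) = ∫ _, (1 : ℝ) ∂μ := by simp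
    _ ≤ ∫ ω, (N 0 ω : ℝ) ∂μ := by
        refine integral_mono (integrable_const 1) hN_int fun ω => ?_
        show (1:ℝ) ≤ (N 0 ω : ℝ)
        exact_mod_cast hN_pos 0 ω
  have hm0 : m ≠ 0 := by linarith
  -- identify EW evaluated at points of H
  have hEWeval : ∀ h : ↥H, EW h = hess (fun x => ∫ ω, S 0 ω x ∂μ) (h : EuclideanSpace ℝ (Fin k)) := by
    intro h
    have h1 : EW h = ∫ ω, (W 0 ω) h ∂μ := by
      rw [hEW]
      exact ContinuousMap.integral_apply hWint h
    have h2 : ∫ ω, (W 0 ω) h ∂μ = ∫ ω, hess (S 0 ω) (h : EuclideanSpace ℝ (Fin k)) ∂μ := by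
      refine integral_congr_ae ?_
      filter_upwards [hsmooth 0] with ω hc
      exact hΓeq _ hc h
    rw [h1, h2, hinterchange _ h.2]
  -- main a.e. argument
  filter_upwards [hslW, hslN, ae_all_iff.2 hsmooth] with ω hWt hNt hsm
  have hNt' : Tendsto (fun R : ℕ => ((∑ r ∈ Finset.range R, (N r ω : ℝ)) / R)⁻¹) atTop
      (𝓝 m⁻¹) := hNt.inv₀ hm0
  have hlim : Tendsto (fun R : ℕ =>
      ‖((∑ r ∈ Finset.range R, (N r ω : ℝ)) / R)⁻¹ •
          ((R : ℝ)⁻¹ • ∑ r ∈ Finset.range R, W r ω) - m⁻¹ • EW‖) atTop (𝓝 0) := by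
    have h0 := (continuous_norm.tendsto (m⁻¹ • EW - m⁻¹ • EW)).comp ((hNt'.smul hWt).sub_const (m⁻¹ • EW))
    have hz : ‖m⁻¹ • EW - m⁻¹ • EW‖ = (0 : ℝ) := by
      rw [sub_self]
      exact @norm_zero C(↥H, X) _
    rw [hz] at h0
    exact h0
  refine Tendsto.congr' ?_ hlim
  filter_upwards [eventually_ge_atTop 1] with R hR
  have hRne : (R : ℝ) ≠ 0 := by positivity
  have hcge : (R : ℝ) ≤ ∑ r ∈ Finset.range R, (N r ω : ℝ) := by
    calc (R : ℝ) = ∑ _r ∈ Finset.range R, (1 : ℝ) := by simp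
    _ ≤ ∑ r ∈ Finset.range R, (N r ω : ℝ) := by
        refine Finset.sum_le_sum fun r _ => ?_
        exact_mod_cast hN_pos r ω
  have hcpos : (0 : ℝ) < ∑ r ∈ Finset.range R, (N r ω : ℝ) := by
    have : (0:ℝ) < (R:ℝ) := by positivity
    linarith
  set c : ℝ := ∑ r ∈ Finset.range R, (N r ω : ℝ) with hc
  have hcne : c ≠ 0 := ne_of_gt hcpos
  have hsmul : (c / R)⁻¹ • ((R : ℝ)⁻¹ • ∑ r ∈ Finset.range R, W r ω)
      = c⁻¹ • ∑ r ∈ Finset.range R, W r ω := by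
    rw [smul_smul]
    congr 1
    field_simp
  rw [hsmul]
  have idA : ∀ h : ↥H, hess (fun x => (∑ r ∈ Finset.range R, S r ω x) / c)
      (h : EuclideanSpace ℝ (Fin k)) = c⁻¹ • (∑ r ∈ Finset.range R, W r ω) h := by
    intro h
    rw [hess_div_const _ _ hcne, hess_sum _ _ (fun r _ => hsm r)]
    congr 1
    rw [ContinuousMap.sum_apply]
    exact Finset.sum_congr rfl fun r _ => (hΓeq _ (hsm r) h).symm
  have idB : ∀ h : ↥H, hess (fun x => (∫ ω', S 0 ω' x ∂μ) / m)
      (h : EuclideanSpace ℝ (Fin k)) = m⁻¹ • EW h := by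
    intro h
    rw [hess_div_const _ _ hm0, hEWeval h]
  calc ‖c⁻¹ • ∑ r ∈ Finset.range R, W r ω - m⁻¹ • EW‖
      = ⨆ h : ↥H, ‖(c⁻¹ • ∑ r ∈ Finset.range R, W r ω - m⁻¹ • EW) h‖ :=
        ContinuousMap.norm_eq_iSup_norm _
    _ = _ := by
        refine congrArg iSup (funext fun h => ?_)
        rw [ContinuousMap.sub_apply, ContinuousMap.smul_apply, ContinuousMap.smul_apply,
          ← idA h, ← idB h]
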